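/- In the global model with local reward r : A × X → ℝ, for every local policy μ and every external policy η, the expected total local reward satisfies E[Σ_{t=0}^{h−1} r(a^t, x^t)] ≤ V̂^D, where V̂^D := sup_π Σ_{(x,y)∈X×Y} b0(x,y)·ν^D_h(π)(x), the supremum ranging over all depth-h local policies π, and where the influence-optimistic plan-time (Dec-POMDP) value vectors are defined by ν^D_0(π)(x) = 0 and ν^D_{k+1}(π)(x) = r(π(ε),x) + max_{u∈U} Σ_{o∈O} Σ_{x'=(x'l,x'n)∈X} Ω(o|π(ε),x')·Pl(x'l|x,π(ε))·Pn(x'n|x,π(ε),u)·ν^D_k(π↓o)(x'). In particular, the locally-optimal value of the sub-problem is at most the influence-optimistic Q-Dec-POMDP upper bound V̂^D. -/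

import Mathlib

open Finset

section GlobalModel

variable {Xl Xn Y A E O U : Type*}
  [Fintype Xl] [Nonempty Xl] [Fintype Xn] [Nonempty Xn] [Fintype Y] [Nonempty Y]
  [Fintype A] [Nonempty A] [Fintype E] [Nonempty E]
  [Fintype O] [Nonempty O] [Fintype U] [Nonempty U]

/-- Expected total local reward `E[∑_{t<k} r(a^t, x^t)]` in the global model, obtained
by backward recursion over the remaining horizon `k`: local actions are chosen by the
local policy `μ` from the local observation history `obs`, external actions by the
external policy `η` from the entire history so far (current state `s` together with the
list `hist` of all past states, joint actions and observations); the global transition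
probability is `Pl · Pn(·|σ) · G` and local observations have probability `Ω`. -/
noncomputable def expTotalr (Pl : Xl → (Xl × Xn) → A → ℝ)
    (Pn : Xn → (Xl × Xn) → A → U → ℝ)
    (G : Y → ((Xl × Xn) × Y) → A × E → (Xl × Xn) → ℝ)
    (σ : ((Xl × Xn) × Y) → A × E → U) (Ω : O → A → (Xl × Xn) → ℝ)
    (r : A → (Xl × Xn) → ℝ)
    (μ : List O → A)
    (η : ((Xl × Xn) × Y) → List (((Xl × Xn) × Y) × (A × E) × O) → E) :
    ℕ → ((Xl × Xn) × Y) → List O → List (((Xl × Xn) × Y) × (A × E) × O) → ℝ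
  | 0 => fun _ _ _ => 0
  | k + 1 => fun s obs hist =>
      r (μ obs) s.1 +
        ∑ s' : (Xl × Xn) × Y, ∑ o : O,
          Pl s'.1.1 s.1 (μ obs) * Pn s'.1.2 s.1 (μ obs) (σ s (μ obs, η s hist)) *
            G s'.2 s (μ obs, η s hist) s'.1 * Ω o (μ obs) s'.1 *
            expTotalr Pl Pn G σ Ω r μ η k s' (obs ++ [o])
              (hist ++ [(s, (μ obs, η s hist), o)])

/-- Influence-optimistic plan-time (Dec-POMDP) value vectors `ν^D_k(π)(x)`. A depth-`k`
local policy is a function `List O → A`; `π []` is its action at the empty history and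
`fun h => π (o :: h)` is the subtree policy `π↓o`. -/
noncomputable def nuD (Pl : Xl → (Xl × Xn) → A → ℝ) (Pn : Xn → (Xl × Xn) → A → U → ℝ)
    (Ω : O → A → (Xl × Xn) → ℝ) (r : A → (Xl × Xn) → ℝ) :
    ℕ → (List O → A) → (Xl × Xn) → ℝ
  | 0 => fun _ _ => 0
  | k + 1 => fun π x =>
      r (π []) x +
        Finset.univ.sup' Finset.univ_nonempty (fun u : U =>
          ∑ o : O, ∑ x' : Xl × Xn,
            Ω o (π []) x' * Pl x'.1 x (π []) * Pn x'.2 x (π []) u *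
              nuD Pl Pn Ω r k (fun h => π (o :: h)) x')

lemma nuD_le_bound (Pl : Xl → (Xl × Xn) → A → ℝ) (Pn : Xn → (Xl × Xn) → A → U → ℝ)
    (Ω : O → A → (Xl × Xn) → ℝ) (r : A → (Xl × Xn) → ℝ)
    (hPl0 : ∀ x'l x a, 0 ≤ Pl x'l x a) (hPl1 : ∀ x a, ∑ x'l : Xl, Pl x'l x a = 1)
    (hPn0 : ∀ x'n x a u, 0 ≤ Pn x'n x a u) (hPn1 : ∀ x a u, ∑ x'n : Xn, Pn x'n x a u = 1)
    (hΩ0 : ∀ o a x', 0 ≤ Ω o a x') (hΩ1 : ∀ a x', ∑ o : O, Ω o a x' = 1) :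
    ∀ (k : ℕ) (π : List O → A) (x : Xl × Xn),
      nuD Pl Pn Ω r k π x ≤ (k : ℝ) *
        Finset.univ.sup' Finset.univ_nonempty (fun p : A × (Xl × Xn) => r p.1 p.2) := by
  set C := Finset.univ.sup' Finset.univ_nonempty (fun p : A × (Xl × Xn) => r p.1 p.2) with hC
  intro k
  induction k with
  | zero => intro π x; simp [nuD]
  | succ k ih =>
    intro π x
    have h1 : r (π []) x ≤ C :=
      Finset.le_sup' (fun p : A × (Xl × Xn) => r p.1 p.2) (Finset.mem_univ (π [], x))
    have h2 : Finset.univ.sup' Finset.univ_nonempty (fun u : U =>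
        ∑ o : O, ∑ x' : Xl × Xn,
          Ω o (π []) x' * Pl x'.1 x (π []) * Pn x'.2 x (π []) u *
            nuD Pl Pn Ω r k (fun h => π (o :: h)) x') ≤ (k : ℝ) * C := by
      apply Finset.sup'_le
      intro u _
      calc ∑ o : O, ∑ x' : Xl × Xn,
            Ω o (π []) x' * Pl x'.1 x (π []) * Pn x'.2 x (π []) u *
              nuD Pl Pn Ω r k (fun h => π (o :: h)) x'
          ≤ ∑ o : O, ∑ x' : Xl × Xn,
            Ω o (π []) x' * Pl x'.1 x (π []) * Pn x'.2 x (π []) u * ((k : ℝ) * C) := by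
            apply Finset.sum_le_sum; intro o _
            apply Finset.sum_le_sum; intro x' _
            exact mul_le_mul_of_nonneg_left (ih _ x')
              (mul_nonneg (mul_nonneg (hΩ0 _ _ _) (hPl0 _ _ _)) (hPn0 _ _ _ _))
        _ = (k : ℝ) * C := by
            simp_rw [← Finset.sum_mul]
            have hsum : ∑ o : O, ∑ x' : Xl × Xn,
                Ω o (π []) x' * Pl x'.1 x (π []) * Pn x'.2 x (π []) u = 1 := by
              rw [Finset.sum_comm]
              have h1 : ∀ x' : Xl × Xn, ∑ o : O,
                  Ω o (π []) x' * Pl x'.1 x (π []) * Pn x'.2 x (π []) u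
                  = Pl x'.1 x (π []) * Pn x'.2 x (π []) u := by
                intro x'
                rw [← Finset.sum_mul, ← Finset.sum_mul, hΩ1, one_mul]
              simp_rw [h1]
              rw [Fintype.sum_prod_type]
              simp_rw [← Finset.mul_sum, hPn1, mul_one, hPl1]
            rw [hsum, one_mul]
    calc nuD Pl Pn Ω r (k + 1) π x ≤ C + (k : ℝ) * C := by
          rw [nuD]; exact add_le_add h1 h2
      _ = ((k : ℝ) + 1) * C := by ring
      _ = ((k + 1 : ℕ) : ℝ) * C := by push_cast; ring

lemma expTotalr_le_nuD (Pl : Xl → (Xl × Xn) → A → ℝ) (Pn : Xn → (Xl × Xn) → A → U → ℝ)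
    (G : Y → ((Xl × Xn) × Y) → A × E → (Xl × Xn) → ℝ)
    (σ : ((Xl × Xn) × Y) → A × E → U) (Ω : O → A → (Xl × Xn) → ℝ)
    (r : A → (Xl × Xn) → ℝ)
    (hPl0 : ∀ x'l x a, 0 ≤ Pl x'l x a)
    (hPn0 : ∀ x'n x a u, 0 ≤ Pn x'n x a u)
    (hG0 : ∀ y' s ae x', 0 ≤ G y' s ae x') (hG1 : ∀ s ae x', ∑ y' : Y, G y' s ae x' = 1)
    (hΩ0 : ∀ o a x', 0 ≤ Ω o a x')
    (μ : List O → A)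
    (η : ((Xl × Xn) × Y) → List (((Xl × Xn) × Y) × (A × E) × O) → E) :
    ∀ (k : ℕ) (s : (Xl × Xn) × Y) (obs : List O)
      (hist : List (((Xl × Xn) × Y) × (A × E) × O)),
      expTotalr Pl Pn G σ Ω r μ η k s obs hist ≤
        nuD Pl Pn Ω r k (fun h => μ (obs ++ h)) s.1 := by
  intro k
  induction k with
  | zero => intro s obs hist; simp [expTotalr, nuD]
  | succ k ih =>
    intro s obs hist
    rw [expTotalr, nuD]
    beta_reduce
    simp only [List.append_nil]
    apply add_le_add_right
    set a := μ obs with ha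
    set u0 := σ s (a, η s hist) with hu0
    have step1 : ∑ s' : (Xl × Xn) × Y, ∑ o : O,
        Pl s'.1.1 s.1 a * Pn s'.1.2 s.1 a u0 * G s'.2 s (a, η s hist) s'.1 * Ω o a s'.1 *
          expTotalr Pl Pn G σ Ω r μ η k s' (obs ++ [o]) (hist ++ [(s, (a, η s hist), o)]) ≤
        ∑ s' : (Xl × Xn) × Y, ∑ o : O,
        Pl s'.1.1 s.1 a * Pn s'.1.2 s.1 a u0 * G s'.2 s (a, η s hist) s'.1 * Ω o a s'.1 *
          nuD Pl Pn Ω r k (fun h => μ (obs ++ o :: h)) s'.1 := by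
      apply Finset.sum_le_sum; intro s' _
      apply Finset.sum_le_sum; intro o _
      have hnn : 0 ≤ Pl s'.1.1 s.1 a * Pn s'.1.2 s.1 a u0 * G s'.2 s (a, η s hist) s'.1 *
          Ω o a s'.1 :=
        mul_nonneg (mul_nonneg (mul_nonneg (hPl0 _ _ _) (hPn0 _ _ _ _)) (hG0 _ _ _ _))
          (hΩ0 _ _ _)
      have := ih s' (obs ++ [o]) (hist ++ [(s, (a, η s hist), o)])
      have heq : (fun h => μ ((obs ++ [o]) ++ h)) = (fun h => μ (obs ++ o :: h)) := by
        funext h; simp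
      rw [heq] at this
      exact mul_le_mul_of_nonneg_left this hnn
    have step2 : ∑ s' : (Xl × Xn) × Y, ∑ o : O,
        Pl s'.1.1 s.1 a * Pn s'.1.2 s.1 a u0 * G s'.2 s (a, η s hist) s'.1 * Ω o a s'.1 *
          nuD Pl Pn Ω r k (fun h => μ (obs ++ o :: h)) s'.1 =
        ∑ o : O, ∑ x' : Xl × Xn,
          Ω o a x' * Pl x'.1 s.1 a * Pn x'.2 s.1 a u0 *
            nuD Pl Pn Ω r k (fun h => μ (obs ++ o :: h)) x' := by
      rw [Fintype.sum_prod_type (f := fun s' : (Xl × Xn) × Y => ∑ o : O,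
        Pl s'.1.1 s.1 a * Pn s'.1.2 s.1 a u0 * G s'.2 s (a, η s hist) s'.1 * Ω o a s'.1 *
          nuD Pl Pn Ω r k (fun h => μ (obs ++ o :: h)) s'.1)]
      dsimp only
      have inner : ∀ x' : Xl × Xn, ∑ y' : Y, ∑ o : O,
          Pl x'.1 s.1 a * Pn x'.2 s.1 a u0 * G y' s (a, η s hist) x' * Ω o a x' *
            nuD Pl Pn Ω r k (fun h => μ (obs ++ o :: h)) x' =
          ∑ o : O, Ω o a x' * Pl x'.1 s.1 a * Pn x'.2 s.1 a u0 *
            nuD Pl Pn Ω r k (fun h => μ (obs ++ o :: h)) x' := by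
        intro x'
        rw [Finset.sum_comm]
        apply Finset.sum_congr rfl; intro o _
        have : ∑ y' : Y, Pl x'.1 s.1 a * Pn x'.2 s.1 a u0 * G y' s (a, η s hist) x' *
            Ω o a x' * nuD Pl Pn Ω r k (fun h => μ (obs ++ o :: h)) x' =
            (∑ y' : Y, G y' s (a, η s hist) x') * (Pl x'.1 s.1 a * Pn x'.2 s.1 a u0 *
              Ω o a x' * nuD Pl Pn Ω r k (fun h => μ (obs ++ o :: h)) x') := by
          rw [Finset.sum_mul]; apply Finset.sum_congr rfl; intro y' _; ring
        rw [this, hG1, one_mul]; ring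
      simp_rw [inner]
      rw [Finset.sum_comm]
    calc _ ≤ _ := step1
      _ = _ := step2
      _ ≤ _ := Finset.le_sup' (f := fun u : U =>
          ∑ o : O, ∑ x' : Xl × Xn,
            Ω o a x' * Pl x'.1 s.1 a * Pn x'.2 s.1 a u *
              nuD Pl Pn Ω r k (fun h => (fun h' => μ (obs ++ h')) (o :: h)) x')
          (Finset.mem_univ u0)

/-- in the global model, for every local policy `μ` and every external
policy `η`, the expected total local reward is at most the influence-optimistic
Q-Dec-POMDP upper bound `V̂^D = sup_π ∑_{(x,y)} b0(x,y) · ν^D_h(π)(x)`; in particular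
the locally-optimal value of the sub-problem is at most `V̂^D`. -/
theorem expTotalr_le_IO_QDecPOMDP
    (Pl : Xl → (Xl × Xn) → A → ℝ) (Pn : Xn → (Xl × Xn) → A → U → ℝ)
    (G : Y → ((Xl × Xn) × Y) → A × E → (Xl × Xn) → ℝ)
    (σ : ((Xl × Xn) × Y) → A × E → U) (Ω : O → A → (Xl × Xn) → ℝ)
    (r : A → (Xl × Xn) → ℝ)
    (hPl0 : ∀ x'l x a, 0 ≤ Pl x'l x a) (hPl1 : ∀ x a, ∑ x'l : Xl, Pl x'l x a = 1)
    (hPn0 : ∀ x'n x a u, 0 ≤ Pn x'n x a u) (hPn1 : ∀ x a u, ∑ x'n : Xn, Pn x'n x a u = 1)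
    (hG0 : ∀ y' s ae x', 0 ≤ G y' s ae x') (hG1 : ∀ s ae x', ∑ y' : Y, G y' s ae x' = 1)
    (hΩ0 : ∀ o a x', 0 ≤ Ω o a x') (hΩ1 : ∀ a x', ∑ o : O, Ω o a x' = 1)
    (b0 : (Xl × Xn) × Y → ℝ) (hb00 : ∀ s, 0 ≤ b0 s) (hb01 : ∑ s : (Xl × Xn) × Y, b0 s = 1)
    (h : ℕ) (μ : List O → A)
    (η : ((Xl × Xn) × Y) → List (((Xl × Xn) × Y) × (A × E) × O) → E) :
    ∑ s : (Xl × Xn) × Y, b0 s * expTotalr Pl Pn G σ Ω r μ η h s [] [] ≤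
      ⨆ π : List O → A, ∑ p : (Xl × Xn) × Y, b0 p * nuD Pl Pn Ω r h π p.1 := by
  set C := Finset.univ.sup' Finset.univ_nonempty (fun p : A × (Xl × Xn) => r p.1 p.2) with hC
  have hbdd : BddAbove (Set.range fun π : List O → A =>
      ∑ p : (Xl × Xn) × Y, b0 p * nuD Pl Pn Ω r h π p.1) := by
    refine ⟨(h : ℝ) * C, ?_⟩
    rintro _ ⟨π, rfl⟩
    calc ∑ p : (Xl × Xn) × Y, b0 p * nuD Pl Pn Ω r h π p.1
        ≤ ∑ p : (Xl × Xn) × Y, b0 p * ((h : ℝ) * C) := by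
          apply Finset.sum_le_sum; intro p _
          exact mul_le_mul_of_nonneg_left
            (nuD_le_bound Pl Pn Ω r hPl0 hPl1 hPn0 hPn1 hΩ0 hΩ1 h π p.1) (hb00 p)
      _ = (h : ℝ) * C := by rw [← Finset.sum_mul, hb01, one_mul]
  have key : ∑ s : (Xl × Xn) × Y, b0 s * expTotalr Pl Pn G σ Ω r μ η h s [] [] ≤
      ∑ p : (Xl × Xn) × Y, b0 p * nuD Pl Pn Ω r h μ p.1 := by
    apply Finset.sum_le_sum; intro s _
    have := expTotalr_le_nuD Pl Pn G σ Ω r hPl0 hPn0 hG0 hG1 hΩ0 μ η h s [] []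
    have heq : (fun h' : List O => μ ([] ++ h')) = μ := by funext h'; simp
    rw [heq] at this
    exact mul_le_mul_of_nonneg_left this (hb00 s)
  exact key.trans (le_ciSup hbdd μ)

end GlobalModel
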